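/- Let q ≥ 1 be an integer and let (B₁, B₀) be either (i) B₁ = (0^{q−1}, 1) and B₀ = (0^{q}, 1), or (ii) B₁ = (0, 1^{q}) and B₀ = (0, 1^{q−1}). For a finite list β = (β(1),…,β(ℓ)) with entries in {0,1}, let Φ(β) be the concatenation B_{β(1)} ++ ⋯ ++ B_{β(ℓ)}. Then for any two nonempty lists β, γ with entries in {0,1}: av(β) ≥ av(γ) if and only if av(Φ(β)) ≥ av(Φ(γ)). -/

import Mathlib

/-- The average of the entries of a list of integers, as a rational number. -/
def listAv (l : List ℤ) : ℚ := (l.sum : ℚ) / (l.length : ℚ)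

/-- `blockSub B1 B0 β = Φ(β)` is the concatenation `B_{β(1)} ++ ⋯ ++ B_{β(ℓ)}`,
where `B_b = B1` if `b = 1` and `B_b = B0` otherwise. -/
def blockSub (B1 B0 : List ℤ) (β : List ℤ) : List ℤ :=
  (β.map (fun b => if b = 1 then B1 else B0)).flatten

lemma blockSub_sum_len (B1 B0 : List ℤ) (β : List ℤ) (h : ∀ b ∈ β, b = 0 ∨ b = 1) :
    ((blockSub B1 B0 β).sum : ℚ) =
      (β.length : ℚ) * (B0.sum : ℚ) + (β.sum : ℚ) * ((B1.sum : ℚ) - (B0.sum : ℚ)) ∧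
    ((blockSub B1 B0 β).length : ℚ) =
      (β.length : ℚ) * (B0.length : ℚ) + (β.sum : ℚ) * ((B1.length : ℚ) - (B0.length : ℚ)) := by
  induction β with
  | nil => simp [blockSub]
  | cons b t ih =>
    obtain ⟨ih1, ih2⟩ := ih (fun x hx => h x (List.mem_cons_of_mem _ hx))
    rcases h b (List.mem_cons_self) with rfl | rfl <;>
      simp [blockSub] at ih1 ih2 ⊢ <;> push_cast <;> constructor <;> nlinarith [ih1, ih2]

lemma sum_bounds (β : List ℤ) (h : ∀ b ∈ β, b = 0 ∨ b = 1) :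
    0 ≤ β.sum ∧ β.sum ≤ β.length := by
  induction β with
  | nil => simp
  | cons b t ih =>
    obtain ⟨ih1, ih2⟩ := ih (fun x hx => h x (List.mem_cons_of_mem _ hx))
    rcases h b (List.mem_cons_self) with rfl | rfl <;> simp <;> push_cast <;> omega

set_option maxHeartbeats 1600000 in
/-- Let `q ≥ 1` and let `(B₁, B₀)` be either `((0^{q−1},1), (0^q,1))`
or `((0,1^q), (0,1^{q−1}))`. Then for any two nonempty `{0,1}`-lists `β, γ`:
`av(β) ≥ av(γ)` iff `av(Φ(β)) ≥ av(Φ(γ))`. -/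
theorem av_iff_av_blocks (q : ℕ) (hq : 1 ≤ q) (B1 B0 : List ℤ)
    (hB : (B1 = List.replicate (q - 1) 0 ++ [1] ∧ B0 = List.replicate q 0 ++ [1]) ∨
          (B1 = 0 :: List.replicate q 1 ∧ B0 = 0 :: List.replicate (q - 1) 1)) :
    ∀ β γ : List ℤ, β ≠ [] → γ ≠ [] →
      (∀ b ∈ β, b = 0 ∨ b = 1) → (∀ b ∈ γ, b = 0 ∨ b = 1) →
      (listAv γ ≤ listAv β ↔ listAv (blockSub B1 B0 γ) ≤ listAv (blockSub B1 B0 β)) := by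
  intro β γ hβne hγne hbβ hbγ
  obtain ⟨hsβ1, hsβ2⟩ := blockSub_sum_len B1 B0 β hbβ
  obtain ⟨hsγ1, hsγ2⟩ := blockSub_sum_len B1 B0 γ hbγ
  obtain ⟨hb0β, hb1β⟩ := sum_bounds β hbβ
  obtain ⟨hb0γ, hb1γ⟩ := sum_bounds γ hbγ
  have hqβ0 : (0:ℚ) ≤ (β.sum : ℚ) := by exact_mod_cast hb0β
  have hqγ0 : (0:ℚ) ≤ (γ.sum : ℚ) := by exact_mod_cast hb0γ
  have hqβ1 : (β.sum : ℚ) ≤ (β.length : ℚ) := by exact_mod_cast hb1β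
  have hqγ1 : (γ.sum : ℚ) ≤ (γ.length : ℚ) := by exact_mod_cast hb1γ
  have hlβ1 : (1:ℚ) ≤ (β.length : ℚ) := by
    exact_mod_cast Nat.one_le_cast.mpr (List.length_pos_iff.mpr hβne)
  have hlγ1 : (1:ℚ) ≤ (γ.length : ℚ) := by
    exact_mod_cast Nat.one_le_cast.mpr (List.length_pos_iff.mpr hγne)
  have hq1 : (1:ℚ) ≤ (q:ℚ) := by exact_mod_cast hq
  set sβ : ℚ := (β.sum : ℚ)
  set sγ : ℚ := (γ.sum : ℚ)
  set lβ : ℚ := (β.length : ℚ)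
  set lγ : ℚ := (γ.length : ℚ)
  rcases hB with ⟨h1, h0⟩ | ⟨h1, h0⟩
  · have e1 : (B1.sum : ℚ) = 1 := by subst h1; simp
    have e0 : (B0.sum : ℚ) = 1 := by subst h0; simp
    have f1 : (B1.length : ℚ) = q := by
      subst h1; simp; rw [Nat.cast_sub hq]; ring
    have f0 : (B0.length : ℚ) = q + 1 := by subst h0; simp
    simp only [e1, e0, f1, f0] at hsβ1 hsβ2 hsγ1 hsγ2
    have dβ : (0:ℚ) < lβ * ((q:ℚ) + 1) + sβ * ((q:ℚ) - ((q:ℚ) + 1)) := by nlinarith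
    have dγ : (0:ℚ) < lγ * ((q:ℚ) + 1) + sγ * ((q:ℚ) - ((q:ℚ) + 1)) := by nlinarith
    unfold listAv
    rw [hsβ1, hsβ2, hsγ1, hsγ2,
      div_le_div_iff₀ (by linarith) (by linarith), div_le_div_iff₀ dγ dβ]
    constructor <;> intro hh <;> nlinarith
  · have e1 : (B1.sum : ℚ) = q := by subst h1; simp
    have e0 : (B0.sum : ℚ) = (q:ℚ) - 1 := by
      subst h0; simp; rw [Nat.cast_sub hq]; ring
    have f1 : (B1.length : ℚ) = q + 1 := by subst h1; simp
    have f0 : (B0.length : ℚ) = q := by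
      subst h0; simp; rw [Nat.cast_sub hq]; ring
    simp only [e1, e0, f1, f0] at hsβ1 hsβ2 hsγ1 hsγ2
    have pβ : (1:ℚ) * 1 ≤ lβ * (q:ℚ) := mul_le_mul hlβ1 hq1 (by linarith) (by linarith)
    have pγ : (1:ℚ) * 1 ≤ lγ * (q:ℚ) := mul_le_mul hlγ1 hq1 (by linarith) (by linarith)
    have dβ : (0:ℚ) < lβ * (q:ℚ) + sβ * ((q:ℚ) + 1 - (q:ℚ)) := by nlinarith
    have dγ : (0:ℚ) < lγ * (q:ℚ) + sγ * ((q:ℚ) + 1 - (q:ℚ)) := by nlinarith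
    unfold listAv
    rw [hsβ1, hsβ2, hsγ1, hsγ2,
      div_le_div_iff₀ (by linarith) (by linarith), div_le_div_iff₀ dγ dβ]
    constructor <;> intro hh <;> nlinarith
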